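/- arXiv:2001.03938 — 3 statements merged into one kernel-verified Lean document; each statement's English description precedes it below -/
import Mathlib

section
/- Let G be the graph on 5 vertices whose complement Ḡ = G_{(c)} consists of a 4-cycle 1-2-3-4-1 with an additional vertex 5 adjacent to vertices 1 and 3 (equivalently, Ḡ has edges {1,2},{2,3},{3,4},{1,4},{1,5},{3,5}). Then over any field, the edge ideal I(G) satisfies index(I(G)) = 1 and pd(I(G)) = 2, so I(G) has almost maximal finite index. -/
open Finsupp

namespace EP

variable (K : Type) [Field K]

/-! ## Simplicial chains over a linearly ordered vertex set -/

variable {V : Type} [Fintype V] [DecidableEq V] [LinearOrder V]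

/-- Boundary of a single (oriented) face, given as a finset. -/
noncomputable def bdFace (s : Finset V) : Finset V →₀ K :=
  ∑ v ∈ s, ((-1 : K) ^ ((s.filter (fun w => w < v)).card)) • Finsupp.single (s.erase v) 1

/-- The simplicial boundary map on the free module on all finsets of vertices
(the augmented oriented chain complex, with the empty set playing the role of
the `(-1)`-dimensional face). -/
noncomputable def bdS : (Finset V →₀ K) →ₗ[K] (Finset V →₀ K) :=
  Finsupp.lsum K fun s => LinearMap.toSpanSingleton K (Finset V →₀ K) (bdFace K s)

/-- Chains supported on faces of a complex `Δ` having `k` vertices. -/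
noncomputable def faceSpan (Δ : Set (Finset V)) (k : ℕ) : Submodule K (Finset V →₀ K) :=
  Submodule.span K {c | ∃ F ∈ Δ, F.card = k ∧ c = Finsupp.single F 1}

/-- Dimension of the `d`-th reduced simplicial homology of `Δ` over `K`. -/
noncomputable def redHomRank (Δ : Set (Finset V)) (d : ℕ) : ℕ :=
  Module.finrank K ↥(faceSpan K Δ (d+1) ⊓ LinearMap.ker (bdS K)) -
    Module.finrank K
      ↥(Submodule.map (bdS K) (faceSpan K Δ (d+2)) ⊓
          (faceSpan K Δ (d+1) ⊓ LinearMap.ker (bdS K)))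

/-- The flag complex of a graph: faces are the cliques. -/
def flagComplex (G : SimpleGraph V) : Set (Finset V) :=
  {F | ∀ i ∈ F, ∀ j ∈ F, i ≠ j → G.Adj i j}

/-- The flag complex of the induced subgraph of `G` on `W`. -/
def flagComplexOn (G : SimpleGraph V) (W : Finset V) : Set (Finset V) :=
  {F | (F : Set V) ⊆ (W : Set V) ∧ ∀ i ∈ F, ∀ j ∈ F, i ≠ j → G.Adj i j}

/-- The induced subcomplex of `Δ` on a vertex subset `W`. -/
def restrictComplex (Δ : Set (Finset V)) (W : Finset V) : Set (Finset V) :=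
  {F | F ∈ Δ ∧ F ⊆ W}

/-- The oriented `1`-chain `[a,b]` (so `[a,b] = -[b,a]`). -/
noncomputable def edgeChain (a b : V) : Finset V →₀ K :=
  if a < b then Finsupp.single {a, b} 1 else -Finsupp.single {a, b} 1

/-- The oriented `2`-chain `[x,y,z]`, antisymmetric under transpositions. -/
noncomputable def triChain (x y z : V) : Finset V →₀ K :=
  if (x < y ∧ y < z) ∨ (y < z ∧ z < x) ∨ (z < x ∧ x < y)
  then Finsupp.single {x, y, z} 1
  else -Finsupp.single {x, y, z} 1

/-! ## Graded Betti numbers of monomial ideals via the Taylor complex -/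

variable {n : ℕ}

/-- The multidegree lcm of the monomial generators indexed by `S`. -/
def mlcm {r : ℕ} (g : Fin r → (Fin n → ℕ)) (S : Finset (Fin r)) : Fin n → ℕ :=
  fun x => S.sup fun k => g k x

/-- The differential of the Taylor complex tensored with the residue field `K`. -/
noncomputable def bdT {r : ℕ} (g : Fin r → (Fin n → ℕ)) :
    (Finset (Fin r) →₀ K) →ₗ[K] (Finset (Fin r) →₀ K) :=
  Finsupp.lsum K fun S => LinearMap.toSpanSingleton K (Finset (Fin r) →₀ K)
    (∑ k ∈ S, if mlcm g (S.erase k) = mlcm g S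
      then ((-1 : K) ^ ((S.filter (fun j => j < k)).card)) • Finsupp.single (S.erase k) (1 : K)
      else 0)

/-- The degree-`j` strand of the Taylor complex in homological degree `p`. -/
noncomputable def strand {r : ℕ} (g : Fin r → (Fin n → ℕ)) (p j : ℕ) :
    Submodule K (Finset (Fin r) →₀ K) :=
  Submodule.span K
    {c | ∃ S : Finset (Fin r), S.card = p ∧ (∑ x, mlcm g S x) = j ∧ c = Finsupp.single S 1}

/-- `dim_K Tor_p(S/I, K)_j`, computed from the Taylor complex on the monomial
generators `g` of `I`. -/
noncomputable def torRank {r : ℕ} (g : Fin r → (Fin n → ℕ)) (p j : ℕ) : ℕ :=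
  Module.finrank K ↥(strand K g p j ⊓ LinearMap.ker (bdT K g)) -
    Module.finrank K
      ↥(Submodule.map (bdT K g) (strand K g (p+1) j) ⊓
          (strand K g p j ⊓ LinearMap.ker (bdT K g)))

/-- The graded Betti number `β_{i,j}(I)` of the monomial ideal `I` generated by
the monomials with exponent vectors `g`, i.e. `dim_K Tor_i(I, K)_j = dim_K Tor_{i+1}(S/I, K)_j`. -/
noncomputable def betti {r : ℕ} (g : Fin r → (Fin n → ℕ)) (i j : ℕ) : ℕ :=
  torRank K g (i+1) j

/-- The monomial with exponent vector `a`. -/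
noncomputable def mono (a : Fin n → ℕ) : MvPolynomial (Fin n) K :=
  MvPolynomial.monomial (Finsupp.equivFunOnFinite.symm a) 1

/-- `g` is a list of exponent vectors of monomials generating the ideal `I`. -/
def IsGenSet {r : ℕ} (g : Fin r → (Fin n → ℕ)) (I : Ideal (MvPolynomial (Fin n) K)) : Prop :=
  Ideal.span (Set.range fun k => mono K (g k)) = I

/-- The ideal (generated by the monomials with exponent vectors `g`) has a
`d`-linear resolution. -/
def HasLinRes {r : ℕ} (g : Fin r → (Fin n → ℕ)) (d : ℕ) : Prop :=
  ∀ i j, betti K g i j ≠ 0 → j = i + d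

/-- Castelnuovo–Mumford regularity of a monomial ideal, from its Betti numbers. -/
noncomputable def regT {r : ℕ} (g : Fin r → (Fin n → ℕ)) : ℕ :=
  sSup {d | ∃ i j, betti K g i j ≠ 0 ∧ j = i + d}

/-! ## Edge ideals -/

/-- The edge ideal of a simple graph. -/
noncomputable def edgeIdeal (G : SimpleGraph (Fin n)) : Ideal (MvPolynomial (Fin n) K) :=
  Ideal.span {m | ∃ i j : Fin n, G.Adj i j ∧ m = MvPolynomial.X i * MvPolynomial.X j}

/-- The edge set of `G` as a finset. -/
noncomputable def edgeFins (G : SimpleGraph (Fin n)) : Finset (Sym2 (Fin n)) :=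
  letI : Fintype ↥G.edgeSet := Fintype.ofFinite _
  G.edgeFinset

/-- The canonical monomial (exponent vector) generators of the edge ideal of `G`. -/
noncomputable def edgeGens (G : SimpleGraph (Fin n)) : Fin (edgeFins G).card → (Fin n → ℕ) :=
  fun k x => if x ∈ ((edgeFins G).equivFin.symm k : Sym2 (Fin n)) then 1 else 0

/-- The graded Betti numbers `β_{i,j}(I(G))` of the edge ideal of `G` over `K`. -/
noncomputable def gBetti (G : SimpleGraph (Fin n)) (i j : ℕ) : ℕ :=
  betti K (edgeGens G) i j

/-- The projective dimension `pd(I(G))` of the edge ideal of `G` over `K`. -/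
noncomputable def gPd (G : SimpleGraph (Fin n)) : ℕ :=
  sSup {i | ∃ j, gBetti K G i j ≠ 0}

/-- The Green–Lazarsfeld index of the edge ideal of `G` over `K`
(`⊤` iff the ideal has a linear resolution). -/
noncomputable def gIndex (G : SimpleGraph (Fin n)) : ℕ∞ :=
  sInf {N : ℕ∞ | ∃ i j : ℕ, N = (i : ℕ∞) ∧ i + 2 < j ∧ gBetti K G i j ≠ 0}

/-- The regularity of the edge ideal of `G` over `K`. -/
noncomputable def gReg (G : SimpleGraph (Fin n)) : ℕ :=
  sSup {d | ∃ i j, gBetti K G i j ≠ 0 ∧ j = i + d}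

/-- The edge ideal of `G` has a (2-)linear resolution over `K`. -/
def gLinRes (G : SimpleGraph (Fin n)) : Prop :=
  ∀ i j, gBetti K G i j ≠ 0 → j = i + 2

/-- The edge ideal of `G` has almost maximal finite index over `K`:
`index(I(G)) = pd(I(G)) - 1` (with the index finite). -/
def AMFI (G : SimpleGraph (Fin n)) : Prop :=
  gIndex K G + 1 = (gPd K G : ℕ∞)

/-! ## Graph-theoretic notions -/

/-- `H` contains an induced (chordless) cycle of length `l`. -/
def HasInducedCycle {W : Type} (H : SimpleGraph W) (l : ℕ) : Prop :=
  ∃ f : ZMod l → W, Function.Injective f ∧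
    ∀ i j : ZMod l, H.Adj (f i) (f j) ↔ (j = i + 1 ∨ i = j + 1)

/-- `H` is chordal: it has no induced cycle of length greater than `3`. -/
def Chordal {W : Type} (H : SimpleGraph W) : Prop :=
  ∀ l : ℕ, 3 < l → ¬ HasInducedCycle H l

end EP


/-- The graph `G_{(c)}`: a `4`-cycle `0 - 1 - 2 - 3 - 0` with a fifth vertex `4` adjacent to
the vertices `0` and `2`. -/
def Gc : SimpleGraph (Fin 5) :=
  SimpleGraph.fromRel (fun i j =>
    (i, j) ∈ ([(0, 1), (1, 2), (2, 3), (0, 3), (0, 4), (2, 4)] : List (Fin 5 × Fin 5)))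


namespace S12aux

open EP Finsupp

/-- Exponent vectors of the four generators `x0x2, x1x3, x1x4, x3x4`. -/
def gen : Fin 4 → Fin 5 → ℕ := ![![1,0,1,0,0],![0,1,0,1,0],![0,1,0,0,1],![0,0,0,1,1]]

variable {K : Type} [Field K]

section core
variable {r : ℕ} {g : Fin r → Fin 5 → ℕ} {κ : Fin 4 → Fin r}

lemma mlcm_image (hgen : ∀ i, g (κ i) = gen i) (s : Finset (Fin 4)) :
    EP.mlcm g (s.image κ) = EP.mlcm gen s := by
  funext x
  unfold EP.mlcm
  rw [Finset.sup_image]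
  exact Finset.sup_congr rfl fun i _ => by simp [Function.comp, hgen i]

lemma exists_rep (hbij : Function.Bijective κ) (S : Finset (Fin r)) :
    ∃ s : Finset (Fin 4), S = s.image κ ∧ s.card = S.card := by
  refine ⟨S.image (Equiv.ofBijective κ hbij).symm, ?_, ?_⟩
  · rw [Finset.image_image]
    ext a
    simp only [Finset.mem_image, Function.comp_apply]
    constructor
    · intro ha
      exact ⟨a, ha, Equiv.ofBijective_apply_symm_apply κ hbij a⟩
    · rintro ⟨b, hb, rfl⟩
      rwa [Equiv.ofBijective_apply_symm_apply κ hbij b]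
  · exact Finset.card_image_of_injective _ (Equiv.injective _)

lemma bdT_single (g : Fin r → Fin 5 → ℕ) (S : Finset (Fin r)) :
    EP.bdT K g (Finsupp.single S 1) =
      ∑ k ∈ S, if EP.mlcm g (S.erase k) = EP.mlcm g S
        then ((-1 : K) ^ ((S.filter (fun j => j < k)).card)) • Finsupp.single (S.erase k) (1 : K)
        else 0 := by
  unfold EP.bdT
  rw [Finsupp.lsum_single, LinearMap.toSpanSingleton_apply_one]

lemma bdT_image_eq_zero (hbij : Function.Bijective κ) (hgen : ∀ i, g (κ i) = gen i)
    (s : Finset (Fin 4))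
    (h : ∀ i ∈ s, EP.mlcm gen (s.erase i) ≠ EP.mlcm gen s) :
    EP.bdT K g (Finsupp.single (s.image κ) 1) = 0 := by
  rw [bdT_single]
  rw [Finset.sum_image (fun a _ b _ hab => hbij.1 hab)]
  refine Finset.sum_eq_zero fun i hi => ?_
  rw [if_neg]
  rw [← Finset.image_erase hbij.1, mlcm_image hgen, mlcm_image hgen]
  exact h i hi

lemma bdT_image_ne_zero (hbij : Function.Bijective κ) (hgen : ∀ i, g (κ i) = gen i)
    (s : Finset (Fin 4)) (i₀ : Fin 4) (hi₀ : i₀ ∈ s)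
    (h : EP.mlcm gen (s.erase i₀) = EP.mlcm gen s) :
    EP.bdT K g (Finsupp.single (s.image κ) 1) ≠ 0 := by
  intro hz
  have hz' := congrArg (fun f : Finset (Fin r) →₀ K => f ((s.erase i₀).image κ)) hz
  rw [bdT_single, Finset.sum_image (fun a _ b _ hab => hbij.1 hab)] at hz'
  simp only [Finsupp.coe_zero, Pi.zero_apply, Finsupp.finset_sum_apply] at hz'
  rw [Finset.sum_eq_single i₀] at hz'
  · rw [← Finset.image_erase hbij.1, mlcm_image hgen, mlcm_image hgen, if_pos h,
      Finsupp.smul_apply, Finsupp.single_apply, if_pos rfl, smul_eq_mul, mul_one] at hz'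
    exact pow_ne_zero _ (neg_ne_zero.mpr (one_ne_zero (α := K))) hz'
  · intro i hi hne
    rw [← Finset.image_erase hbij.1]
    have hne' : (s.erase i).image κ ≠ (s.erase i₀).image κ := by
      intro heq
      have h2 : s.erase i = s.erase i₀ := Finset.image_injective hbij.1 heq
      have hmem : i₀ ∈ s.erase i := Finset.mem_erase.mpr ⟨Ne.symm hne, hi₀⟩
      rw [h2] at hmem
      exact (Finset.notMem_erase i₀ s) hmem
    simp [apply_ite (fun f : Finset (Fin r) →₀ K => f ((s.erase i₀).image κ)),
      Finsupp.single_apply, hne']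
  · intro habs
    exact absurd hi₀ habs

lemma single_mem_strand (hbij : Function.Bijective κ) (hgen : ∀ i, g (κ i) = gen i)
    (s : Finset (Fin 4)) (p j : ℕ) (hc : s.card = p)
    (hd : (∑ x, EP.mlcm gen s x) = j) :
    Finsupp.single (s.image κ) (1:K) ∈ EP.strand K g p j := by
  apply Submodule.subset_span
  refine ⟨s.image κ, ?_, ?_, rfl⟩
  · rw [Finset.card_image_of_injective _ hbij.1]; exact hc
  · simp only [mlcm_image hgen]; exact hd

lemma strand_eq_bot (hbij : Function.Bijective κ) (hgen : ∀ i, g (κ i) = gen i) (p j : ℕ)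
    (h : ∀ s : Finset (Fin 4), s.card = p → (∑ x, EP.mlcm gen s x) ≠ j) :
    EP.strand K g p j = ⊥ := by
  rw [EP.strand, Submodule.span_eq_bot]
  rintro c ⟨S, hc, hd, rfl⟩
  obtain ⟨s, rfl, hcard⟩ := exists_rep hbij S
  rw [Finset.card_image_of_injective _ hbij.1] at hc
  simp only [mlcm_image hgen] at hd
  exact absurd hd (h s hc)

lemma card_eq_four (hbij : Function.Bijective κ) : r = 4 := by
  have := Fintype.card_of_bijective hbij
  simpa using this.symm

lemma strand45_le (hbij : Function.Bijective κ) (hgen : ∀ i, g (κ i) = gen i) :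
    EP.strand K g 4 5 ≤
      Submodule.span K {Finsupp.single (Finset.univ : Finset (Fin r)) (1:K)} := by
  apply Submodule.span_le.mpr
  rintro c ⟨S, hc, hd, rfl⟩
  have hS : S = Finset.univ := Finset.eq_univ_of_card S (by rw [hc, Fintype.card_fin, card_eq_four hbij])
  rw [hS]
  exact Submodule.mem_span_singleton_self _

lemma finrank_pos_of_mem {P : Submodule K (Finset (Fin r) →₀ K)}
    {v : Finset (Fin r) →₀ K} (hv : v ∈ P) (h0 : v ≠ 0) : 1 ≤ Module.finrank K P := by
  have h1 : Module.finrank K (Submodule.span K {v}) = 1 := finrank_span_singleton h0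
  have h2 : Submodule.span K {v} ≤ P := Submodule.span_le.mpr (by simpa using hv)
  calc 1 = Module.finrank K (Submodule.span K {v}) := h1.symm
    _ ≤ Module.finrank K P := Submodule.finrank_mono h2

lemma two_le_finrank {P : Submodule K (Finset (Fin r) →₀ K)} {S T : Finset (Fin r)}
    (hST : S ≠ T) (hS : Finsupp.single S (1:K) ∈ P) (hT : Finsupp.single T (1:K) ∈ P) :
    2 ≤ Module.finrank K P := by
  have hinj : Function.Injective (![S, T] : Fin 2 → Finset (Fin r)) := by
    intro a b hab
    fin_cases a <;> fin_cases b <;> simp_all [hST, hST.symm]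
  have hli : LinearIndependent K (fun b : Fin 2 => Finsupp.single (![S, T] b) (1:K)) := by
    have h := (Finsupp.basisSingleOne (R := K) (ι := Finset (Fin r))).linearIndependent.comp
      ![S, T] hinj
    simpa [Finsupp.coe_basisSingleOne, Function.comp_def] using h
  have hsp : Submodule.span K (Set.range fun b : Fin 2 => Finsupp.single (![S, T] b) (1:K)) ≤ P := by
    rw [Submodule.span_le]
    rintro x ⟨b, rfl⟩
    fin_cases b <;> simpa using (by first | exact hS | exact hT)
  have hcard := finrank_span_eq_card hli
  calc (2:ℕ) = Module.finrank K (Submodule.span K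
        (Set.range fun b : Fin 2 => Finsupp.single (![S, T] b) (1:K))) := by
        rw [hcard]; simp
    _ ≤ Module.finrank K P := Submodule.finrank_mono hsp

lemma torRank_eq_zero_of_strand_bot {p j : ℕ} (h : EP.strand K g p j = ⊥) :
    EP.torRank K g p j = 0 := by
  unfold EP.torRank
  rw [h, bot_inf_eq, finrank_bot, inf_bot_eq, finrank_bot, Nat.zero_sub]

variable (K) in
lemma tor_one (hbij : Function.Bijective κ) (hgen : ∀ i, g (κ i) = gen i)
    (j : ℕ) (hj : j ≠ 2) : EP.torRank K g 1 j = 0 := by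
  apply torRank_eq_zero_of_strand_bot
  apply strand_eq_bot hbij hgen
  intro s hs
  rw [(by decide : ∀ s : Finset (Fin 4), s.card = 1 → (∑ x, EP.mlcm gen s x) = 2) s hs]
  exact fun h => hj h.symm

variable (K) in
lemma tor_24 (hbij : Function.Bijective κ) (hgen : ∀ i, g (κ i) = gen i) :
    EP.torRank K g 2 4 ≠ 0 := by
  have hb : EP.strand K g 3 4 = ⊥ :=
    strand_eq_bot hbij hgen 3 4 (by decide)
  have hv : Finsupp.single (({0,1} : Finset (Fin 4)).image κ) (1:K) ∈
      EP.strand K g 2 4 ⊓ LinearMap.ker (EP.bdT K g) := by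
    refine ⟨single_mem_strand hbij hgen _ 2 4 (by decide) (by decide), ?_⟩
    exact LinearMap.mem_ker.mpr (bdT_image_eq_zero hbij hgen _ (by decide))
  have ha : 1 ≤ Module.finrank K ↥(EP.strand K g 2 4 ⊓ LinearMap.ker (EP.bdT K g)) :=
    finrank_pos_of_mem hv (fun h => one_ne_zero (Finsupp.single_eq_zero.mp h))
  unfold EP.torRank
  rw [show (2:ℕ)+1 = 3 from rfl, hb, Submodule.map_bot, bot_inf_eq, finrank_bot]
  omega

variable (K) in
lemma tor_45 (hbij : Function.Bijective κ) (hgen : ∀ i, g (κ i) = gen i) :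
    EP.torRank K g 4 5 = 0 := by
  have hbd : EP.bdT K g (Finsupp.single (Finset.univ : Finset (Fin r)) (1:K)) ≠ 0 := by
    have h := bdT_image_ne_zero (K := K) hbij hgen Finset.univ 1 (Finset.mem_univ 1) (by decide)
    rwa [Finset.image_univ_of_surjective hbij.2] at h
  have hker : EP.strand K g 4 5 ⊓ LinearMap.ker (EP.bdT K g) = ⊥ := by
    rw [eq_bot_iff]
    rintro x ⟨hx1, hx2⟩
    obtain ⟨t, rfl⟩ := Submodule.mem_span_singleton.mp (strand45_le hbij hgen hx1)
    have hz : t • EP.bdT K g (Finsupp.single (Finset.univ : Finset (Fin r)) (1:K)) = 0 := by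
      rw [← (EP.bdT K g).map_smul]
      exact LinearMap.mem_ker.mp hx2
    rcases smul_eq_zero.mp hz with ht | hv
    · rw [ht, zero_smul]; exact Submodule.zero_mem ⊥
    · exact absurd hv hbd
  unfold EP.torRank
  rw [hker, finrank_bot, Nat.zero_sub]

variable (K) in
lemma tor_high (hbij : Function.Bijective κ) (hgen : ∀ i, g (κ i) = gen i)
    (p j : ℕ) (hp : 4 ≤ p) : EP.torRank K g p j = 0 := by
  by_cases hpj : p = 4 ∧ j = 5
  · rw [hpj.1, hpj.2]
    exact tor_45 K hbij hgen
  · apply torRank_eq_zero_of_strand_bot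
    apply strand_eq_bot hbij hgen
    intro s hs
    have hs4 : s.card ≤ 4 := by
      have := Finset.card_le_univ s
      simpa using this
    have hp4 : p = 4 := le_antisymm (hs ▸ hs4) hp
    have huniv : s = Finset.univ := Finset.eq_univ_of_card s (by rw [hs, hp4]; rfl)
    rw [huniv, (by decide : (∑ x, EP.mlcm gen (Finset.univ : Finset (Fin 4)) x) = 5)]
    intro hj5
    exact hpj ⟨hp4, hj5.symm⟩

variable (K) in
lemma tor_35 (hbij : Function.Bijective κ) (hgen : ∀ i, g (κ i) = gen i) :
    EP.torRank K g 3 5 ≠ 0 := by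
  set P := EP.strand K g 3 5 ⊓ LinearMap.ker (EP.bdT K g) with hP
  have hmem : ∀ s : Finset (Fin 4), s.card = 3 → (∑ x, EP.mlcm gen s x) = 5 →
      (∀ i ∈ s, EP.mlcm gen (s.erase i) ≠ EP.mlcm gen s) →
      Finsupp.single (s.image κ) (1:K) ∈ P := by
    intro s h1 h2 h3
    exact ⟨single_mem_strand hbij hgen s 3 5 h1 h2,
      LinearMap.mem_ker.mpr (bdT_image_eq_zero hbij hgen s h3)⟩
  have h1 := hmem {0,1,2} (by decide) (by decide) (by decide)
  have h2 := hmem {0,1,3} (by decide) (by decide) (by decide)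
  have hne : (({0,1,2} : Finset (Fin 4)).image κ) ≠ (({0,1,3} : Finset (Fin 4)).image κ) :=
    fun h => absurd (Finset.image_injective hbij.1 h) (by decide)
  have ha : 2 ≤ Module.finrank K ↥P := two_le_finrank hne h1 h2
  have hble : Module.finrank K
      ↥(Submodule.map (EP.bdT K g) (EP.strand K g 4 5) ⊓ P) ≤ 1 := by
    have hv0 : Finsupp.single (Finset.univ : Finset (Fin r)) (1:K) ≠ 0 :=
      fun h => one_ne_zero (Finsupp.single_eq_zero.mp h)
    calc Module.finrank K ↥(Submodule.map (EP.bdT K g) (EP.strand K g 4 5) ⊓ P)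
        ≤ Module.finrank K ↥(Submodule.map (EP.bdT K g) (EP.strand K g 4 5)) :=
          Submodule.finrank_mono inf_le_left
      _ ≤ Module.finrank K ↥(EP.strand K g 4 5) := Submodule.finrank_map_le _ _
      _ ≤ Module.finrank K ↥(Submodule.span K
            {Finsupp.single (Finset.univ : Finset (Fin r)) (1:K)}) :=
          Submodule.finrank_mono (strand45_le hbij hgen)
      _ = 1 := finrank_span_singleton hv0
  unfold EP.torRank
  rw [show (3:ℕ)+1 = 4 from rfl]
  rw [← hP]
  omega

end core

end S12aux

namespace S12aux

def edge : Fin 4 → Sym2 (Fin 5) := ![s(0,2), s(1,3), s(1,4), s(3,4)]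

lemma edgeFins_eq (G : SimpleGraph (Fin 5)) (hG : Gᶜ = Gc) :
    EP.edgeFins G = ({s(0,2), s(1,3), s(1,4), s(3,4)} : Finset (Sym2 (Fin 5))) := by
  have hGG : G = Gcᶜ := by rw [← hG, compl_compl]
  subst hGG
  ext e
  refine Sym2.ind (fun a b => ?_) e
  have hmf : ∀ (inst : Fintype ↑(Gcᶜ).edgeSet) (e : Sym2 (Fin 5)),
      e ∈ @SimpleGraph.edgeFinset _ Gcᶜ inst ↔ e ∈ (Gcᶜ).edgeSet :=
    fun inst e => SimpleGraph.mem_edgeFinset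
  unfold EP.edgeFins
  rw [hmf, SimpleGraph.mem_edgeSet]
  simp only [SimpleGraph.compl_adj, Gc, SimpleGraph.fromRel_adj]
  revert a b
  decide

lemma exists_kappa (G : SimpleGraph (Fin 5)) (hG : Gᶜ = Gc) :
    ∃ κ : Fin 4 → Fin (EP.edgeFins G).card, Function.Bijective κ ∧
      ∀ i, EP.edgeGens G (κ i) = gen i := by
  have hE := edgeFins_eq G hG
  have hmem : ∀ i : Fin 4, edge i ∈ EP.edgeFins G := by
    rw [hE]; decide
  refine ⟨fun i => (EP.edgeFins G).equivFin ⟨edge i, hmem i⟩, ⟨?_, ?_⟩, ?_⟩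
  · intro a b hab
    have h1 := (EP.edgeFins G).equivFin.injective hab
    have h2 : edge a = edge b := congrArg Subtype.val h1
    exact (by decide : ∀ a b : Fin 4, edge a = edge b → a = b) a b h2
  · intro k
    set y := (EP.edgeFins G).equivFin.symm k with hy
    have hy2 : (y : Sym2 (Fin 5)) ∈ ({s(0,2), s(1,3), s(1,4), s(3,4)} : Finset (Sym2 (Fin 5))) := by
      rw [← hE]; exact y.property
    obtain ⟨i, hi⟩ := (by decide :
      ∀ z ∈ ({s(0,2), s(1,3), s(1,4), s(3,4)} : Finset (Sym2 (Fin 5))), ∃ i, edge i = z) _ hy2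
    refine ⟨i, ?_⟩
    have hsub : (⟨edge i, hmem i⟩ : {x // x ∈ EP.edgeFins G}) = y := Subtype.ext hi
    have h3 := congrArg (EP.edgeFins G).equivFin hsub
    rw [hy, Equiv.apply_symm_apply] at h3
    exact h3
  · intro i
    funext x
    unfold EP.edgeGens
    rw [Equiv.symm_apply_apply]
    exact (by decide : ∀ (i : Fin 4) (x : Fin 5), (if x ∈ edge i then (1:ℕ) else 0) = gen i x) i x

end S12aux

/-- If the complement of `G` is the graph `G_{(c)}`, then over any field
`index(I(G)) = 1` and `pd(I(G)) = 2`, so `I(G)` has almost maximal finite index. -/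
theorem statement12 (K : Type) [Field K] (G : SimpleGraph (Fin 5)) (hG : Gᶜ = Gc) :
    EP.gIndex K G = 1 ∧ EP.gPd K G = 2 := by
  obtain ⟨κ, hbij, hgen⟩ := S12aux.exists_kappa G hG
  have tor1 := S12aux.tor_one K hbij hgen
  have t24 := S12aux.tor_24 K hbij hgen
  have t35 := S12aux.tor_35 K hbij hgen
  have thigh := S12aux.tor_high K hbij hgen
  constructor
  · apply le_antisymm
    · apply sInf_le
      refine ⟨1, 4, by norm_num, by norm_num, ?_⟩
      show EP.torRank K (EP.edgeGens G) 2 4 ≠ 0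
      exact t24
    · apply le_sInf
      rintro N ⟨i, j, rfl, hij, hB⟩
      have hi : i ≠ 0 := by
        rintro rfl
        apply hB
        show EP.torRank K (EP.edgeGens G) 1 j = 0
        exact tor1 j (by omega)
      exact_mod_cast Nat.one_le_iff_ne_zero.mpr hi
  · have hub : ∀ i ∈ {i | ∃ j, EP.gBetti K G i j ≠ 0}, i ≤ 2 := by
      rintro i ⟨j, hB⟩
      by_contra hgt
      push_neg at hgt
      apply hB
      show EP.torRank K (EP.edgeGens G) (i+1) j = 0
      exact thigh (i+1) j (by omega)
    apply le_antisymm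
    · exact csSup_le ⟨2, 5, t35⟩ hub
    · exact le_csSup ⟨2, hub⟩ ⟨5, t35⟩
end

section
/- Let G be the graph on 6 vertices whose complement Ḡ = G_{(d)_1} is the 4-gonal dipyramid: a 4-cycle 1-2-3-4-1 with two apexes 5 and 6 each adjacent to all of 1,2,3,4 (and 5,6 not adjacent). Then over any field, the edge ideal I = I(G) satisfies index(I) = 1, pd(I) = 2, β_{2,6}(I) = 1, and reg(I) = 4. -/
open Finsupp

/-- The graph `G_{(d)_1}`: the `4`-gonal dipyramid, i.e. a `4`-cycle `0 - 1 - 2 - 3 - 0`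
with two apexes `4` and `5` each adjacent to all of `0, 1, 2, 3` (and `4, 5` not adjacent). -/
def Gd1 : SimpleGraph (Fin 6) :=
  SimpleGraph.fromRel (fun i j =>
    (i, j) ∈ ([(0, 1), (1, 2), (2, 3), (0, 3), (4, 0), (4, 1), (4, 2), (4, 3),
      (5, 0), (5, 1), (5, 2), (5, 3)] : List (Fin 6 × Fin 6)))


/-! ## Auxiliary material for the proof of Statement 13 -/

instance : DecidableRel Gd1.Adj := fun a b =>
  decidable_of_iff _ (SimpleGraph.fromRel_adj _ a b).symm

instance : DecidableRel (Gd1ᶜ).Adj := fun a b =>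
  decidable_of_iff _ (SimpleGraph.compl_adj Gd1 a b).symm

/-- The edge set of `Gd1ᶜ`: a perfect matching on `6` vertices. -/
def E0 : Finset (Sym2 (Fin 6)) := {s(0,2), s(1,3), s(4,5)}

lemma aux_hE : EP.edgeFins Gd1ᶜ = E0 := by
  unfold EP.edgeFins
  ext e
  simp only [SimpleGraph.edgeFinset, Set.mem_toFinset]
  induction e using Sym2.ind with
  | _ a b =>
    rw [SimpleGraph.mem_edgeSet]
    revert a b; decide

lemma aux_hcard : (EP.edgeFins Gd1ᶜ).card = 3 := by rw [aux_hE]; decide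

lemma aux_E0sum : ∀ e ∈ E0, (∑ x : Fin 6, (if x ∈ e then (1:ℕ) else 0)) = 2 := by decide

lemma aux_E0disj : ∀ e ∈ E0, ∀ e' ∈ E0, e ≠ e' → ∀ x : Fin 6, ¬(x ∈ e ∧ x ∈ e') := by decide

lemma aux_E0ne : ∀ e ∈ E0, ∃ x : Fin 6, x ∈ e := by decide

section Abstract
variable {K : Type} [Field K] {n r : ℕ} {g : Fin r → (Fin n → ℕ)}
variable (hsum : ∀ k, ∑ x, g k x = 2)
variable (hdisj : ∀ k l, k ≠ l → ∀ x, g k x = 0 ∨ g l x = 0)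
variable (hne : ∀ k, ∃ x, g k x ≠ 0)

set_option linter.unusedSectionVars false

include hsum hdisj in
lemma aux_mlcm_deg (S : Finset (Fin r)) : ∑ x, EP.mlcm g S x = 2 * S.card := by
  induction S using Finset.induction_on with
  | empty => simp [EP.mlcm]
  | @insert a S ha IH =>
    have hpt : ∀ x, EP.mlcm g (insert a S) x = g a x + EP.mlcm g S x := by
      intro x
      rw [show EP.mlcm g (insert a S) x = g a x ⊔ EP.mlcm g S x from Finset.sup_insert]
      rcases Nat.eq_zero_or_pos (g a x) with h0 | hp
      · simp [h0, EP.mlcm]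
      · have hS : EP.mlcm g S x = 0 := by
          apply (Finset.sup_eq_bot_iff _ _).mpr
          intro l hl
          rcases hdisj a l (by rintro rfl; exact ha hl) x with h | h
          · omega
          · exact h
        simp [hS]
    rw [Finset.sum_congr rfl (fun x _ => hpt x), Finset.sum_add_distrib, hsum a, IH,
      Finset.card_insert_of_notMem ha]
    ring

include hdisj hne in
lemma aux_mlcm_erase_ne {S : Finset (Fin r)} {k : Fin r} (hk : k ∈ S) :
    EP.mlcm g (S.erase k) ≠ EP.mlcm g S := by
  obtain ⟨x, hx⟩ := hne k
  intro h
  have h1 : EP.mlcm g (S.erase k) x = 0 := by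
    apply (Finset.sup_eq_bot_iff _ _).mpr
    intro l hl
    rcases hdisj l k (Finset.ne_of_mem_erase hl) x with h | h
    · exact h
    · exact absurd h hx
  have h2 : g k x ≤ EP.mlcm g S x := Finset.le_sup (f := fun k => g k x) hk
  have := congrFun h x
  omega

include hdisj hne in
lemma aux_bdT_eq_zero : EP.bdT K g = 0 := by
  apply Finsupp.lhom_ext
  intro S a
  rw [EP.bdT, Finsupp.lsum_single]
  have : (∑ k ∈ S, if EP.mlcm g (S.erase k) = EP.mlcm g S
      then ((-1 : K) ^ ((S.filter (fun j => j < k)).card)) • Finsupp.single (S.erase k) (1 : K)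
      else 0) = 0 :=
    Finset.sum_eq_zero fun k hk => if_neg (aux_mlcm_erase_ne hdisj hne hk)
  rw [this]
  simp

include hsum hdisj hne in
lemma aux_torRank_eq (p j : ℕ) :
    EP.torRank K g p j = Module.finrank K ↥(EP.strand K g p j) := by
  rw [EP.torRank, aux_bdT_eq_zero hdisj hne, LinearMap.ker_zero, Submodule.map_zero]
  rw [inf_top_eq, bot_inf_eq, finrank_bot, Nat.sub_zero]

include hsum hdisj in
lemma aux_strand_eq_bot {p j : ℕ} (h : j ≠ 2 * p) : EP.strand K g p j = ⊥ := by
  rw [EP.strand, show {c | ∃ S : Finset (Fin r), S.card = p ∧ (∑ x, EP.mlcm g S x) = j ∧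
      c = Finsupp.single S (1:K)} = ∅ from ?_, Submodule.span_empty]
  ext c
  simp only [Set.mem_setOf_eq, Set.mem_empty_iff_false, iff_false]
  rintro ⟨S, hcard, hdeg, rfl⟩
  rw [aux_mlcm_deg hsum hdisj, hcard] at hdeg
  exact h hdeg.symm

include hsum hdisj hne in
lemma aux_betti_support {i j : ℕ} (h : EP.betti K g i j ≠ 0) :
    j = 2 * (i + 1) ∧ i + 1 ≤ r := by
  rw [EP.betti, aux_torRank_eq hsum hdisj hne] at h
  by_cases hj : j = 2 * (i + 1)
  · refine ⟨hj, ?_⟩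
    by_contra hr
    apply h
    rw [show EP.strand K g (i+1) j = ⊥ from ?_, finrank_bot]
    rw [EP.strand, show {c | ∃ S : Finset (Fin r), S.card = i+1 ∧ (∑ x, EP.mlcm g S x) = j ∧
        c = Finsupp.single S (1:K)} = ∅ from ?_, Submodule.span_empty]
    ext c
    simp only [Set.mem_setOf_eq, Set.mem_empty_iff_false, iff_false]
    rintro ⟨S, hcard, hdeg, rfl⟩
    exact hr (hcard ▸ (Finset.card_le_univ S).trans_eq (by simp))
  · exact absurd (by rw [aux_strand_eq_bot hsum hdisj hj, finrank_bot]) h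

include hsum hdisj in
lemma aux_strand36 (hr : r = 3) : Module.finrank K ↥(EP.strand K g 3 6) = 1 := by
  subst hr
  have hset : {c | ∃ S : Finset (Fin 3), S.card = 3 ∧ (∑ x, EP.mlcm g S x) = 6 ∧
      c = Finsupp.single S (1:K)} = {Finsupp.single (Finset.univ : Finset (Fin 3)) (1:K)} := by
    ext c
    simp only [Set.mem_setOf_eq, Set.mem_singleton_iff]
    constructor
    · rintro ⟨S, h3, _, rfl⟩
      have : S = Finset.univ := Finset.card_eq_iff_eq_univ S |>.mp (by simpa using h3)
      rw [this]
    · rintro rfl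
      exact ⟨Finset.univ, by simp, by rw [aux_mlcm_deg hsum hdisj]; simp, rfl⟩
  rw [EP.strand, hset]
  exact finrank_span_singleton (by simp [Finsupp.single_eq_zero])

include hsum hdisj in
lemma aux_strand24_ne (hr : r = 3) : EP.strand K g 2 4 ≠ ⊥ := by
  subst hr
  have mem : Finsupp.single ({0,1} : Finset (Fin 3)) (1:K) ∈ EP.strand K g 2 4 :=
    Submodule.subset_span ⟨{0,1}, by decide, by rw [aux_mlcm_deg hsum hdisj]; rfl, rfl⟩
  intro h
  rw [h, Submodule.mem_bot] at mem
  exact one_ne_zero (Finsupp.single_eq_zero.mp mem)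

include hsum hdisj hne in
lemma aux_betti26 (hr : r = 3) : EP.betti K g 2 6 = 1 := by
  rw [EP.betti, aux_torRank_eq hsum hdisj hne]
  exact aux_strand36 hsum hdisj hr

include hsum hdisj hne in
lemma aux_betti14 (hr : r = 3) : EP.betti K g 1 4 ≠ 0 := by
  rw [EP.betti, aux_torRank_eq hsum hdisj hne]
  intro h
  exact aux_strand24_ne hsum hdisj hr (Submodule.finrank_eq_zero.mp h)
end Abstract

/-- If the complement of `G` is the `4`-gonal dipyramid `G_{(d)_1}`, then
over any field `index(I(G)) = 1`, `pd(I(G)) = 2`, `β_{2,6}(I(G)) = 1` and `reg(I(G)) = 4`. -/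
theorem statement13 (K : Type) [Field K] (G : SimpleGraph (Fin 6)) (hG : Gᶜ = Gd1) :
    EP.gIndex K G = 1 ∧ EP.gPd K G = 2 ∧ EP.gBetti K G 2 6 = 1 ∧ EP.gReg K G = 4 := by
  have hG2 : G = Gd1ᶜ := by rw [← hG, compl_compl]
  subst hG2
  set g := EP.edgeGens Gd1ᶜ with hg
  have hmem : ∀ k, ((EP.edgeFins Gd1ᶜ).equivFin.symm k : Sym2 (Fin 6)) ∈ E0 :=
    fun k => aux_hE ▸ ((EP.edgeFins Gd1ᶜ).equivFin.symm k).2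
  have hsum : ∀ k, ∑ x, g k x = 2 := fun k => aux_E0sum _ (hmem k)
  have hdisj : ∀ k l, k ≠ l → ∀ x, g k x = 0 ∨ g l x = 0 := by
    intro k l hkl x
    have hee : ((EP.edgeFins Gd1ᶜ).equivFin.symm k : Sym2 (Fin 6)) ≠
        ((EP.edgeFins Gd1ᶜ).equivFin.symm l : Sym2 (Fin 6)) := by
      intro h
      exact hkl ((EP.edgeFins Gd1ᶜ).equivFin.symm.injective (Subtype.coe_injective h))
    have hd := aux_E0disj _ (hmem k) _ (hmem l) hee x
    by_cases h1 : x ∈ ((EP.edgeFins Gd1ᶜ).equivFin.symm k : Sym2 (Fin 6))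
    · right
      have h2 : ¬ x ∈ ((EP.edgeFins Gd1ᶜ).equivFin.symm l : Sym2 (Fin 6)) :=
        fun h2 => hd ⟨h1, h2⟩
      simp [hg, EP.edgeGens, h2]
    · left
      simp [hg, EP.edgeGens, h1]
  have hne : ∀ k, ∃ x, g k x ≠ 0 := by
    intro k
    obtain ⟨x, hx⟩ := aux_E0ne _ (hmem k)
    exact ⟨x, by simp [hg, EP.edgeGens, hx]⟩
  have hsupp : ∀ i j : ℕ, EP.gBetti K Gd1ᶜ i j ≠ 0 → j = 2 * (i + 1) ∧ i + 1 ≤ 3 := by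
    intro i j h
    have := aux_betti_support hsum hdisj hne h
    rwa [aux_hcard] at this
  have h26 : EP.gBetti K Gd1ᶜ 2 6 = 1 := aux_betti26 hsum hdisj hne aux_hcard
  have h14 : EP.gBetti K Gd1ᶜ 1 4 ≠ 0 := aux_betti14 hsum hdisj hne aux_hcard
  refine ⟨?_, ?_, h26, ?_⟩
  · -- index
    unfold EP.gIndex
    apply le_antisymm
    · apply sInf_le
      exact ⟨1, 4, by norm_num, by norm_num, h14⟩
    · apply le_sInf
      rintro N ⟨i, j, rfl, hij, hb⟩
      have h1 := (hsupp i j hb).1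
      have h2 : 1 ≤ i := by omega
      exact_mod_cast h2
  · -- pd
    unfold EP.gPd
    have hmem2 : (2:ℕ) ∈ {i | ∃ j, EP.gBetti K Gd1ᶜ i j ≠ 0} :=
      ⟨6, by rw [h26]; exact one_ne_zero⟩
    apply le_antisymm
    · apply csSup_le ⟨2, hmem2⟩
      rintro i ⟨j, hb⟩
      have := (hsupp i j hb).2
      omega
    · apply le_csSup
      · exact ⟨2, by rintro i ⟨j, hb⟩; have := (hsupp i j hb).2; omega⟩
      · exact hmem2
  · -- reg
    unfold EP.gReg
    have hmem4 : (4:ℕ) ∈ {d | ∃ i j, EP.gBetti K Gd1ᶜ i j ≠ 0 ∧ j = i + d} :=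
      ⟨2, 6, by rw [h26]; exact one_ne_zero, rfl⟩
    apply le_antisymm
    · apply csSup_le ⟨4, hmem4⟩
      rintro d ⟨i, j, hb, rfl⟩
      have := hsupp i _ hb
      omega
    · apply le_csSup
      · exact ⟨4, by rintro d ⟨i, j, hb, rfl⟩; have := hsupp i _ hb; omega⟩
      · exact hmem4
end

section
/- Let G be a simple graph. If the s-th power I(G)^s of the edge ideal has a linear resolution for some s ≥ 1, then G is gap-free, i.e., the complement of G contains no induced 4-cycle. -/
open Finsupp

set_option linter.unusedSectionVars false

namespace S15
open MvPolynomial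

variable {K : Type} [Field K] {n : ℕ}

lemma mono_coe (w : Fin n →₀ ℕ) : EP.mono K ⇑w = monomial w 1 := by
  unfold EP.mono; rw [Finsupp.equivFunOnFinite_symm_coe]

def EdgeExp (G : SimpleGraph (Fin n)) : Set (Fin n →₀ ℕ) :=
  {w | ∃ i j, G.Adj i j ∧ w = Finsupp.single i 1 + Finsupp.single j 1}

def SumExp (G : SimpleGraph (Fin n)) (s : ℕ) : Set (Fin n →₀ ℕ) :=
  {w | ∃ l : Multiset (Fin n →₀ ℕ), Multiset.card l = s ∧ (∀ p ∈ l, p ∈ EdgeExp G) ∧ w = l.sum}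

lemma edgeIdeal_eq (G : SimpleGraph (Fin n)) :
    EP.edgeIdeal K G = Ideal.span ((fun w => monomial w (1:K)) '' EdgeExp G) := by
  unfold EP.edgeIdeal
  congr 1
  ext m
  constructor
  · rintro ⟨i, j, hij, rfl⟩
    exact ⟨_, ⟨i, j, hij, rfl⟩, by rw [X, X, monomial_mul, one_mul]⟩
  · rintro ⟨w, ⟨i, j, hij, rfl⟩, rfl⟩
    exact ⟨i, j, hij, by rw [X, X, monomial_mul, one_mul]⟩

lemma pow_eq (G : SimpleGraph (Fin n)) (s : ℕ) :
    EP.edgeIdeal K G ^ s = Ideal.span ((fun w => monomial w (1:K)) '' SumExp G s) := by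
  induction s with
  | zero =>
      rw [pow_zero]
      have : SumExp (n := n) G 0 = {0} := by
        ext w
        constructor
        · rintro ⟨l, hl, -, rfl⟩
          rw [Multiset.card_eq_zero] at hl
          simp [hl]
        · rintro rfl
          exact ⟨0, by simp⟩
      rw [this]
      simp [Ideal.one_eq_top, Ideal.span_singleton_one (α := MvPolynomial (Fin n) K)]
  | succ s ih =>
      rw [pow_succ, ih, edgeIdeal_eq, Ideal.span_mul_span']
      congr 1
      ext m
      constructor
      · rintro ⟨x, ⟨w, ⟨l, hc, he, rfl⟩, rfl⟩, y, ⟨v, hv, rfl⟩, rfl⟩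
        refine ⟨l.sum + v, ⟨v ::ₘ l, ?_, ?_, ?_⟩, ?_⟩
        · simp [hc]
        · intro p hp
          rcases Multiset.mem_cons.mp hp with rfl | hp
          · exact hv
          · exact he p hp
        · simp [add_comm]
        · simp [monomial_mul]
      · rintro ⟨w, ⟨l, hc, he, rfl⟩, rfl⟩
        obtain ⟨v, l', rfl⟩ : ∃ v l', l = v ::ₘ l' := by
          rcases l with ⟨L⟩
          cases L with
          | nil => simp at hc
          | cons v L => exact ⟨v, L, rfl⟩
        refine ⟨monomial l'.sum 1, ⟨l'.sum, ⟨l', by simpa using hc, fun p hp => he p (Multiset.mem_cons_of_mem hp), rfl⟩, rfl⟩,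
          monomial v 1, ⟨v, he v (Multiset.mem_cons_self v l'), rfl⟩, ?_⟩
        simp [monomial_mul, Multiset.sum_cons, add_comm]

lemma mem_pow_iff (G : SimpleGraph (Fin n)) (s : ℕ) (m : Fin n →₀ ℕ) :
    monomial m (1:K) ∈ EP.edgeIdeal K G ^ s ↔ ∃ w ∈ SumExp G s, w ≤ m := by
  rw [pow_eq, mem_ideal_span_monomial_image]
  simp [support_monomial]

end S15

namespace S15
open MvPolynomial
variable {K : Type} [Field K] {n : ℕ}

section vecs
variable (a b c d : Fin n) (s : ℕ)

def uf : Fin n → ℕ := fun x =>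
  (if x = a then s else 0) + (if x = b then 1 else 0) + (if x = c then s else 0) +
    (if x = d then 1 else 0)

def u1f : Fin n → ℕ := fun x => (if x = a then s else 0) + (if x = c then s else 0)

def u2f : Fin n → ℕ := fun x =>
  (if x = a then s - 1 else 0) + (if x = b then 1 else 0) + (if x = c then s - 1 else 0) +
    (if x = d then 1 else 0)

noncomputable def vAC : Fin n →₀ ℕ := Finsupp.single a 1 + Finsupp.single c 1

end vecs

section master

variable {G : SimpleGraph (Fin n)} {s : ℕ} {a b c d : Fin n}
variable (hs : 1 ≤ s)
variable (hab : a ≠ b) (hac : a ≠ c) (had : a ≠ d) (hbc : b ≠ c) (hbd : b ≠ d) (hcd : c ≠ d)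
variable (hAC : G.Adj a c) (hBD : G.Adj b d)
variable (nab : ¬ G.Adj a b) (nbc : ¬ G.Adj b c) (ncd : ¬ G.Adj c d) (nad : ¬ G.Adj a d)

omit [Field K] in
lemma sum_uf : (∑ x : Fin n, uf a b c d s x) = 2 * s + 2 := by
  unfold uf
  rw [Finset.sum_add_distrib, Finset.sum_add_distrib, Finset.sum_add_distrib]
  simp only [Finset.sum_ite_eq', Finset.mem_univ, if_pos]
  omega

lemma decomp (l : Multiset (Fin n →₀ ℕ)) (h : ∀ w ∈ l, w = vAC a c ∨ w = vAC b d) :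
    ∃ i t : ℕ, i + t = Multiset.card l ∧ l.sum = i • vAC a c + t • vAC b d := by
  induction l using Multiset.induction_on with
  | empty => exact ⟨0, 0, by simp⟩
  | cons w l ih =>
      obtain ⟨i, t, hit, hsum⟩ := ih (fun w hw => h w (Multiset.mem_cons_of_mem hw))
      rcases h w (Multiset.mem_cons_self w l) with rfl | rfl
      · exact ⟨i + 1, t, by simp [hit, Multiset.card_cons]; omega,
          by rw [Multiset.sum_cons, hsum, succ_nsmul]; abel⟩
      · exact ⟨i, t + 1, by simp [hit, Multiset.card_cons]; omega,
          by rw [Multiset.sum_cons, hsum, succ_nsmul]; abel⟩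

include hs hab hac had hbc hbd hcd hAC hBD nab nbc ncd nad in
lemma edge_class (i j : Fin n) (hadj : G.Adj i j)
    (hle : ∀ x, (Finsupp.single i 1 + Finsupp.single j 1 : Fin n →₀ ℕ) x ≤ uf a b c d s x) :
    (Finsupp.single i 1 + Finsupp.single j 1 : Fin n →₀ ℕ) = vAC a c ∨
      (Finsupp.single i 1 + Finsupp.single j 1 : Fin n →₀ ℕ) = vAC b d := by
  have hij : i ≠ j := hadj.ne
  have hival : (Finsupp.single i 1 + Finsupp.single j 1 : Fin n →₀ ℕ) i = 1 := by
    simp [Finsupp.single_apply, hij, (Ne.symm hij)]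
  have hjval : (Finsupp.single i 1 + Finsupp.single j 1 : Fin n →₀ ℕ) j = 1 := by
    simp [Finsupp.single_apply, hij, (Ne.symm hij)]
  have hi : i = a ∨ i = b ∨ i = c ∨ i = d := by
    by_contra hcon
    push_neg at hcon
    obtain ⟨h1, h2, h3, h4⟩ := hcon
    have := hle i
    rw [hival] at this
    simp [uf, h1, h2, h3, h4] at this
  have hj : j = a ∨ j = b ∨ j = c ∨ j = d := by
    by_contra hcon
    push_neg at hcon
    obtain ⟨h1, h2, h3, h4⟩ := hcon
    have := hle j
    rw [hjval] at this
    simp [uf, h1, h2, h3, h4] at this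
  rcases hi with rfl | rfl | rfl | rfl <;> rcases hj with rfl | rfl | rfl | rfl
  · exact absurd rfl hij
  · exact absurd hadj nab
  · exact Or.inl (by simp [vAC])
  · exact absurd hadj nad
  · exact absurd hadj (fun h => nab h.symm)
  · exact absurd rfl hij
  · exact absurd hadj nbc
  · exact Or.inr (by simp [vAC])
  · exact Or.inl (by simp [vAC, add_comm])
  · exact absurd hadj (fun h => nbc h.symm)
  · exact absurd rfl hij
  · exact absurd hadj ncd
  · exact absurd hadj (fun h => nad h.symm)
  · exact Or.inr (by simp [vAC, add_comm])
  · exact absurd hadj (fun h => ncd h.symm)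
  · exact absurd rfl hij

lemma mem_pow_elim {G : SimpleGraph (Fin n)} {s : ℕ} (m : Fin n → ℕ)
    (hm : EP.mono K m ∈ EP.edgeIdeal K G ^ s) :
    ∃ l : Multiset (Fin n →₀ ℕ), Multiset.card l = s ∧
      (∀ w ∈ l, ∃ i j, G.Adj i j ∧ w = Finsupp.single i 1 + Finsupp.single j 1) ∧
      ∀ x, (l.sum) x ≤ m x := by
  unfold EP.mono at hm
  rw [mem_pow_iff] at hm
  obtain ⟨w, ⟨l, hc, he, rfl⟩, hle⟩ := hm
  exact ⟨l, hc, he, fun x => by simpa using (Finsupp.le_def.mp hle) x⟩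

lemma mem_pow_intro {G : SimpleGraph (Fin n)} {s : ℕ} (l : Multiset (Fin n →₀ ℕ))
    (hc : Multiset.card l = s)
    (he : ∀ w ∈ l, ∃ i j, G.Adj i j ∧ w = Finsupp.single i 1 + Finsupp.single j 1) :
    EP.mono K ⇑(l.sum) ∈ EP.edgeIdeal K G ^ s := by
  rw [mono_coe, mem_pow_iff]
  exact ⟨l.sum, ⟨l, hc, he, rfl⟩, le_rfl⟩

end master
end S15

namespace S15
open MvPolynomial

variable {K : Type} [Field K] {n : ℕ}

omit [Field K] in
lemma vAC_apply (u v x : Fin n) :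
    (vAC u v) x = (if x = u then 1 else 0) + (if x = v then 1 else 0) := by
  rcases eq_or_ne x u with rfl | h1 <;> rcases eq_or_ne x v with rfl | h2
  · simp [vAC, Finsupp.single_apply]
  · simp [vAC, Finsupp.single_apply, h2, Ne.symm h2]
  · simp [vAC, Finsupp.single_apply, h1, Ne.symm h1]
  · simp [vAC, Finsupp.single_apply, h1, h2, Ne.symm h1, Ne.symm h2]

section master

variable {G : SimpleGraph (Fin n)} {s : ℕ} {a b c d : Fin n}
variable (hs : 1 ≤ s)
variable (hab : a ≠ b) (hac : a ≠ c) (had : a ≠ d) (hbc : b ≠ c) (hbd : b ≠ d) (hcd : c ≠ d)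
variable (hAC : G.Adj a c) (hBD : G.Adj b d)
variable (nab : ¬ G.Adj a b) (nbc : ¬ G.Adj b c) (ncd : ¬ G.Adj c d) (nad : ¬ G.Adj a d)

omit [Field K] in
lemma sum_le_of_mem {l : Multiset (Fin n →₀ ℕ)} {w : Fin n →₀ ℕ} (hw : w ∈ l) (x : Fin n) :
    w x ≤ (l.sum) x := by
  obtain ⟨t, rfl⟩ := Multiset.exists_cons_of_mem hw
  rw [Multiset.sum_cons, Finsupp.add_apply]
  exact Nat.le_add_right _ _

include hab hac had hbc hbd hcd in
omit [Field K] in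
lemma uf_vals : uf a b c d s a = s ∧ uf a b c d s b = 1 ∧ uf a b c d s c = s ∧
    uf a b c d s d = 1 := by
  refine ⟨?_, ?_, ?_, ?_⟩ <;> simp [uf, hab, hac, had, hbc, hbd, hcd,
    Ne.symm hab, Ne.symm hac, Ne.symm had, Ne.symm hbc, Ne.symm hbd, Ne.symm hcd]

include hs hab hac had hbc hbd hcd hAC hBD nab nbc ncd nad in
lemma CL (m : Fin n → ℕ) (hle : ∀ x, m x ≤ uf a b c d s x)
    (hm : EP.mono K m ∈ EP.edgeIdeal K G ^ s) :
    (m a = s ∧ m c = s) ∨ (m b = 1 ∧ m d = 1) := by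
  obtain ⟨l, hc, he, hsum⟩ := mem_pow_elim m hm
  have hcl : ∀ w ∈ l, w = vAC a c ∨ w = vAC b d := by
    intro w hw
    obtain ⟨i, j, hadj, rfl⟩ := he w hw
    exact edge_class hs hab hac had hbc hbd hcd hAC hBD nab nbc ncd nad i j hadj
      (fun x => le_trans (le_trans (sum_le_of_mem hw x) (hsum x)) (hle x))
  obtain ⟨i, t, hit, hls⟩ := decomp l hcl
  obtain ⟨hufa, hufb, hufc, hufd⟩ := uf_vals hab hac had hbc hbd hcd (s := s)
  have hval : ∀ x, (l.sum) x = i * (vAC a c) x + t * (vAC b d) x := by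
    intro x; rw [hls]; simp
  have hia : (l.sum) a = i := by
    rw [hval a]; simp [vAC_apply, hab, hac, had, hbc, hbd, hcd, Ne.symm hab, Ne.symm hac, Ne.symm had, Ne.symm hbc, Ne.symm hbd, Ne.symm hcd]
  have hic : (l.sum) c = i := by
    rw [hval c]; simp [vAC_apply, hab, hac, had, hbc, hbd, hcd, Ne.symm hab, Ne.symm hac, Ne.symm had, Ne.symm hbc, Ne.symm hbd, Ne.symm hcd]
  have hib : (l.sum) b = t := by
    rw [hval b]; simp [vAC_apply, hab, hac, had, hbc, hbd, hcd, Ne.symm hab, Ne.symm hac, Ne.symm had, Ne.symm hbc, Ne.symm hbd, Ne.symm hcd]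
  have hid : (l.sum) d = t := by
    rw [hval d]; simp [vAC_apply, hab, hac, had, hbc, hbd, hcd, Ne.symm hab, Ne.symm hac, Ne.symm had, Ne.symm hbc, Ne.symm hbd, Ne.symm hcd]
  rw [hc] at hit
  rcases Nat.eq_zero_or_pos t with ht | ht
  · left
    have h1 := hsum a; have h2 := hsum c; have h3 := hle a; have h4 := hle c
    rw [hia] at h1; rw [hic] at h2; rw [hufa] at h3; rw [hufc] at h4
    omega
  · right
    have h1 := hsum b; have h2 := hsum d; have h3 := hle b; have h4 := hle d
    rw [hib] at h1; rw [hid] at h2; rw [hufb] at h3; rw [hufd] at h4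
    omega

end master
end S15

namespace S15
open MvPolynomial

variable {K : Type} [Field K] {n : ℕ}

section master

variable {G : SimpleGraph (Fin n)} {s : ℕ} {a b c d : Fin n} {r : ℕ} {g : Fin r → (Fin n → ℕ)}
variable (hs : 1 ≤ s)
variable (hab : a ≠ b) (hac : a ≠ c) (had : a ≠ d) (hbc : b ≠ c) (hbd : b ≠ d) (hcd : c ≠ d)
variable (hAC : G.Adj a c) (hBD : G.Adj b d)
variable (nab : ¬ G.Adj a b) (nbc : ¬ G.Adj b c) (ncd : ¬ G.Adj c d) (nad : ¬ G.Adj a d)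

/-- every generator whose monomial lies in the span of monomials `mono (g k)` dominates some
`g k`; and every `mono (g k)` is in `I^s`. -/
lemma gen_le (hgen : EP.IsGenSet K g (EP.edgeIdeal K G ^ s)) (m : Fin n → ℕ)
    (hm : EP.mono K m ∈ EP.edgeIdeal K G ^ s) : ∃ k, ∀ x, g k x ≤ m x := by
  rw [← hgen] at hm
  have heq : (fun k => EP.mono K (g k)) =
      (fun w => monomial w (1:K)) ∘ (fun k => Finsupp.equivFunOnFinite.symm (g k)) := rfl
  rw [heq, Set.range_comp, mem_ideal_span_monomial_image] at hm
  obtain ⟨si, ⟨k, rfl⟩, hle⟩ := hm (Finsupp.equivFunOnFinite.symm m)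
    (by simp [EP.mono, support_monomial])
  exact ⟨k, fun x => by simpa using Finsupp.le_def.mp hle x⟩

lemma gen_mem (hgen : EP.IsGenSet K g (EP.edgeIdeal K G ^ s)) (k : Fin r) :
    EP.mono K (g k) ∈ EP.edgeIdeal K G ^ s := by
  rw [← hgen]
  exact Ideal.subset_span ⟨k, rfl⟩

include hac in
omit [Field K] in
lemma u1f_eq (x : Fin n) : u1f a c s x = (s • vAC a c) x := by
  rw [Finsupp.smul_apply, vAC_apply, smul_eq_mul]
  unfold u1f
  by_cases h1 : x = a
  · subst h1; simp [hac, Ne.symm hac]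
  · by_cases h2 : x = c
    · subst h2; simp [Ne.symm hac, h1]
    · simp [h1, h2]

include hab hac had hbc hbd hcd in
omit [Field K] in
lemma u2f_eq (x : Fin n) : u2f a b c d s x = ((s-1) • vAC a c + vAC b d) x := by
  simp only [Finsupp.add_apply, Finsupp.smul_apply, vAC_apply, u2f, smul_eq_mul]
  by_cases h1 : x = a; · subst h1; simp [hab, hac, had, Ne.symm hab, Ne.symm hac, Ne.symm had]
  by_cases h2 : x = b; · subst h2; simp [hab, hbc, hbd, Ne.symm hab, Ne.symm hbc, Ne.symm hbd]
  by_cases h3 : x = c; · subst h3; simp [hac, hbc, hcd, Ne.symm hac, Ne.symm hbc, Ne.symm hcd]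
  by_cases h4 : x = d; · subst h4; simp [had, hbd, hcd, Ne.symm had, Ne.symm hbd, Ne.symm hcd]
  simp [h1, h2, h3, h4]

include hs hab hac had hbc hbd hcd in
omit [Field K] in
lemma u1f_le_uf (x : Fin n) : u1f a c s x ≤ uf a b c d s x := by
  unfold u1f uf; split_ifs <;> omega

include hs hab hac had hbc hbd hcd in
omit [Field K] in
lemma u2f_le_uf (x : Fin n) : u2f a b c d s x ≤ uf a b c d s x := by
  unfold u2f uf; split_ifs <;> omega

include hs hab hac had hbc hbd hcd hAC hBD nab nbc ncd nad in
lemma ex_k1 (hgen : EP.IsGenSet K g (EP.edgeIdeal K G ^ s)) : ∃ k, g k = u1f a c s := by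
  have hmem : EP.mono K (u1f a c s) ∈ EP.edgeIdeal K G ^ s := by
    have h0 := mem_pow_intro (K := K) (G := G) (s := s) (Multiset.replicate s (vAC a c))
      (by simp) (fun w hw => ⟨a, c, hAC, by rw [Multiset.eq_of_mem_replicate hw]; rfl⟩)
    have : ⇑((Multiset.replicate s (vAC a c)).sum) = u1f a c s := by
      funext x
      rw [Multiset.sum_replicate, ← u1f_eq hac]
    rwa [this] at h0
  obtain ⟨k, hk⟩ := gen_le hgen _ hmem
  refine ⟨k, ?_⟩
  have hmemk := gen_mem hgen k
  obtain ⟨l, hc, he, hsum⟩ := mem_pow_elim (g k) hmemk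
  have hall : ∀ w ∈ l, w = vAC a c := by
    intro w hw
    have hwle : ∀ x, w x ≤ u1f a c s x :=
      fun x => le_trans (le_trans (sum_le_of_mem hw x) (hsum x)) (hk x)
    obtain ⟨i, j, hadj, rfl⟩ := he w hw
    rcases edge_class hs hab hac had hbc hbd hcd hAC hBD nab nbc ncd nad i j hadj
      (fun x => le_trans (hwle x) (u1f_le_uf hs hab hac had hbc hbd hcd x)) with h | h
    · exact h
    · exfalso
      have := hwle b
      rw [h] at this
      simp [vAC_apply, hbd, u1f, hab, hbc, Ne.symm hab, Ne.symm hbc] at this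
  have hrep : l = Multiset.replicate s (vAC a c) := Multiset.eq_replicate.mpr ⟨hc, hall⟩
  funext x
  refine le_antisymm (hk x) ?_
  have := hsum x
  rw [hrep, Multiset.sum_replicate, ← u1f_eq hac] at this
  exact this

include hs hab hac had hbc hbd hcd hAC hBD nab nbc ncd nad in
lemma ex_k2 (hgen : EP.IsGenSet K g (EP.edgeIdeal K G ^ s)) : ∃ k, g k = u2f a b c d s := by
  have hmem : EP.mono K (u2f a b c d s) ∈ EP.edgeIdeal K G ^ s := by
    have h0 := mem_pow_intro (K := K) (G := G) (s := s)
      (Multiset.replicate (s-1) (vAC a c) + {vAC b d})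
      (by simp; omega)
      (fun w hw => by
        rcases Multiset.mem_add.mp hw with hw | hw
        · exact ⟨a, c, hAC, by rw [Multiset.eq_of_mem_replicate hw]; rfl⟩
        · exact ⟨b, d, hBD, by rw [Multiset.mem_singleton.mp hw]; rfl⟩)
    have : ⇑((Multiset.replicate (s-1) (vAC a c) + {vAC b d}).sum) = u2f a b c d s := by
      funext x
      rw [Multiset.sum_add, Multiset.sum_replicate, Multiset.sum_singleton,
        ← u2f_eq hab hac had hbc hbd hcd]
    rwa [this] at h0
  obtain ⟨k, hk⟩ := gen_le hgen _ hmem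
  refine ⟨k, ?_⟩
  have hmemk := gen_mem hgen k
  obtain ⟨l, hc, he, hsum⟩ := mem_pow_elim (g k) hmemk
  have hall : ∀ w ∈ l, w = vAC a c ∨ w = vAC b d := by
    intro w hw
    obtain ⟨i, j, hadj, rfl⟩ := he w hw
    exact edge_class hs hab hac had hbc hbd hcd hAC hBD nab nbc ncd nad i j hadj
      (fun x => le_trans (le_trans (le_trans (sum_le_of_mem hw x) (hsum x)) (hk x))
        (u2f_le_uf hs hab hac had hbc hbd hcd x))
  obtain ⟨i, t, hit, hls⟩ := decomp l hall
  rw [hc] at hit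
  have hia : l.sum a = i * 1 + t * 0 := by
    rw [hls]; simp [vAC_apply, hab, hac, had, Ne.symm hab, Ne.symm hac, Ne.symm had]
  have hib : l.sum b = i * 0 + t * 1 := by
    rw [hls]; simp [vAC_apply, hab, hbc, hbd, Ne.symm hab, Ne.symm hbc, Ne.symm hbd]
  have h1 : i ≤ s - 1 := by
    have h2 := le_trans (le_trans (by omega : i ≤ l.sum a) (hsum a)) (hk a)
    have : u2f a b c d s a = s - 1 := by simp [u2f, hab, hac, had, Ne.symm hab, Ne.symm hac, Ne.symm had]
    omega
  have h2 : t ≤ 1 := by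
    have h2 := le_trans (le_trans (by omega : t ≤ l.sum b) (hsum b)) (hk b)
    have : u2f a b c d s b = 1 := by simp [u2f, hbc, hbd, hab, Ne.symm hab, Ne.symm hbc, Ne.symm hbd]
    omega
  have hi : i = s - 1 := by omega
  have ht : t = 1 := by omega
  subst hi; subst ht
  funext x
  refine le_antisymm (hk x) ?_
  have := hsum x
  rw [hls] at this
  simpa [u2f_eq hab hac had hbc hbd hcd x] using this

end master
end S15

namespace S15
open MvPolynomial

noncomputable def eps (K : Type) [Field K] {n r : ℕ} (g : Fin r → (Fin n → ℕ))
    (a c : Fin n) (s : ℕ) (k : Fin r) : K :=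
  if g k a = s ∧ g k c = s then 1 else 0

noncomputable def psi (K : Type) [Field K] {n r : ℕ} (g : Fin r → (Fin n → ℕ))
    (a c : Fin n) (s : ℕ) (uu : Fin n → ℕ) (S : Finset (Fin r)) : K :=
  if EP.mlcm g S = uu then
    ∑ k ∈ S, (-1 : K) ^ ((S.filter (fun j => j < k)).card) * eps K g a c s k
  else 0

noncomputable def phi (K : Type) [Field K] {n r : ℕ} (g : Fin r → (Fin n → ℕ))
    (a c : Fin n) (s : ℕ) (uu : Fin n → ℕ) : (Finset (Fin r) →₀ K) →ₗ[K] K :=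
  Finsupp.linearCombination K (psi K g a c s uu)

variable {K : Type} [Field K] {n : ℕ}

lemma phi_single {r : ℕ} (g : Fin r → (Fin n → ℕ)) (a c : Fin n) (s : ℕ) (uu : Fin n → ℕ)
    (S : Finset (Fin r)) (x : K) :
    phi K g a c s uu (Finsupp.single S x) = x * psi K g a c s uu S := by
  simp [phi, Finsupp.linearCombination_single, smul_eq_mul]

lemma mlcm_singleton {r : ℕ} (g : Fin r → (Fin n → ℕ)) (k : Fin r) :
    EP.mlcm g {k} = g k := by
  funext x; simp [EP.mlcm]

lemma mlcm_pair {r : ℕ} (g : Fin r → (Fin n → ℕ)) (x y : Fin r) :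
    EP.mlcm g {x, y} = fun v => g x v ⊔ g y v := by
  funext v; simp [EP.mlcm]

lemma bdT_single {r : ℕ} (g : Fin r → (Fin n → ℕ)) (S : Finset (Fin r)) :
    EP.bdT K g (Finsupp.single S 1) =
      ∑ k ∈ S, if EP.mlcm g (S.erase k) = EP.mlcm g S
        then ((-1 : K) ^ ((S.filter (fun j => j < k)).card)) • Finsupp.single (S.erase k) (1:K)
        else 0 := by
  unfold EP.bdT
  rw [Finsupp.lsum_single, LinearMap.toSpanSingleton_apply, one_smul]

lemma psi_pair {r : ℕ} (g : Fin r → (Fin n → ℕ)) (a c : Fin n) (s : ℕ) (uu : Fin n → ℕ)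
    {x y : Fin r} (hxy : x < y) :
    psi K g a c s uu {x, y} =
      if EP.mlcm g {x, y} = uu then eps K g a c s x - eps K g a c s y else 0 := by
  unfold psi
  have f1 : ({x, y} : Finset (Fin r)).filter (fun j => j < x) = ∅ := by
    ext k
    simp only [Finset.mem_filter, Finset.mem_insert, Finset.mem_singleton,
      Finset.notMem_empty, iff_false, not_and]
    rintro (rfl | rfl)
    · exact lt_irrefl _
    · exact not_lt.mpr hxy.le
  have f2 : ({x, y} : Finset (Fin r)).filter (fun j => j < y) = {x} := by
    ext k
    simp only [Finset.mem_filter, Finset.mem_insert, Finset.mem_singleton]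
    constructor
    · rintro ⟨rfl | rfl, hlt⟩
      · rfl
      · exact absurd hlt (lt_irrefl _)
    · rintro rfl
      exact ⟨Or.inl rfl, hxy⟩
  have hsum : (∑ k ∈ ({x, y} : Finset (Fin r)),
      (-1 : K) ^ ((({x, y} : Finset (Fin r)).filter (fun j => j < k)).card) * eps K g a c s k)
      = eps K g a c s x - eps K g a c s y := by
    rw [Finset.sum_pair hxy.ne, f1, f2]
    simp
    ring
  rw [hsum]

lemma exists_sorted {α : Type} [LinearOrder α] [DecidableEq α] (T : Finset α) (h : T.card = 3) :
    ∃ p q t : α, p < q ∧ q < t ∧ T = {p, q, t} := by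
  obtain ⟨x, y, z, hxy, hxz, hyz, rfl⟩ := Finset.card_eq_three.mp h
  have hperm : ∀ u v w : α, ({x, y, z} : Finset α) = {x, y, z} → True := fun _ _ _ _ => trivial
  rcases lt_trichotomy x y with h1 | h1 | h1
  · rcases lt_trichotomy y z with h2 | h2 | h2
    · exact ⟨x, y, z, h1, h2, rfl⟩
    · exact absurd h2 hyz
    · rcases lt_trichotomy x z with h3 | h3 | h3
      · exact ⟨x, z, y, h3, h2, by ext w; simp; tauto⟩
      · exact absurd h3 hxz
      · exact ⟨z, x, y, h3, h1, by ext w; simp; tauto⟩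
  · exact absurd h1 hxy
  · rcases lt_trichotomy x z with h2 | h2 | h2
    · exact ⟨y, x, z, h1, h2, by ext w; simp; tauto⟩
    · exact absurd h2 hxz
    · rcases lt_trichotomy y z with h3 | h3 | h3
      · exact ⟨y, z, x, h3, h2, by ext w; simp; tauto⟩
      · exact absurd h3 hyz
      · exact ⟨z, y, x, h3, h1, by ext w; simp; tauto⟩

end S15

namespace S15
open MvPolynomial

variable {K : Type} [Field K] {n : ℕ}

section master2

variable {G : SimpleGraph (Fin n)} {s : ℕ} {a b c d : Fin n} {r : ℕ} {g : Fin r → (Fin n → ℕ)}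
variable (hs : 1 ≤ s)
variable (hab : a ≠ b) (hac : a ≠ c) (had : a ≠ d) (hbc : b ≠ c) (hbd : b ≠ d) (hcd : c ≠ d)
variable (hAC : G.Adj a c) (hBD : G.Adj b d)
variable (nab : ¬ G.Adj a b) (nbc : ¬ G.Adj b c) (ncd : ¬ G.Adj c d) (nad : ¬ G.Adj a d)

include hab hac had hbc hbd hcd in
omit [Field K] in
lemma mixed_lcm {x y : Fin r}
    (hxle : ∀ v, g x v ≤ uf a b c d s v) (hyle : ∀ v, g y v ≤ uf a b c d s v)
    (hxA : g x a = s ∧ g x c = s) (hyB : g y b = 1 ∧ g y d = 1) :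
    EP.mlcm g {x, y} = uf a b c d s := by
  obtain ⟨hufa, hufb, hufc, hufd⟩ := uf_vals hab hac had hbc hbd hcd (s := s)
  rw [mlcm_pair]
  funext v
  refine le_antisymm (sup_le (hxle v) (hyle v)) ?_
  rcases eq_or_ne v a with rfl | h1
  · rw [hufa, ← hxA.1]; exact le_sup_left
  rcases eq_or_ne v b with rfl | h2
  · rw [hufb, ← hyB.1]; exact le_sup_right
  rcases eq_or_ne v c with rfl | h3
  · rw [hufc, ← hxA.2]; exact le_sup_left
  rcases eq_or_ne v d with rfl | h4
  · rw [hufd, ← hyB.2]; exact le_sup_right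
  · have h0 : uf a b c d s v = 0 := by simp [uf, h1, h2, h3, h4]
    rw [h0]; exact Nat.zero_le _

include hab hac had hbc hbd hcd in
omit [Field K] in
lemma mixed_lcm' {x y : Fin r}
    (hxle : ∀ v, g x v ≤ uf a b c d s v) (hyle : ∀ v, g y v ≤ uf a b c d s v)
    (hyA : g y a = s ∧ g y c = s) (hxB : g x b = 1 ∧ g x d = 1) :
    EP.mlcm g {x, y} = uf a b c d s := by
  rw [Finset.pair_comm]
  exact mixed_lcm hab hac had hbc hbd hcd hyle hxle hyA hxB

include hs hab hac had hbc hbd hcd hAC hBD nab nbc ncd nad in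
lemma phi_vanish (hgen : EP.IsGenSet K g (EP.edgeIdeal K G ^ s)) (T : Finset (Fin r))
    (hT : T.card = 3) :
    phi K g a c s (uf a b c d s) (EP.bdT K g (Finsupp.single T 1)) = 0 := by
  obtain ⟨p, q, t, hpq, hqt, rfl⟩ := exists_sorted T hT
  have hpt : p < t := hpq.trans hqt
  have hpq' : p ≠ q := hpq.ne
  have hpt' : p ≠ t := hpt.ne
  have hqt' : q ≠ t := hqt.ne
  have e1 : ({p, q, t} : Finset (Fin r)).erase p = {q, t} := by
    rw [Finset.erase_insert (by simp [hpq', hpt'])]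
  have e2 : ({p, q, t} : Finset (Fin r)).erase q = {p, t} := by
    rw [Finset.erase_insert_of_ne hpq', Finset.erase_insert (by simp [hqt'])]
  have e3 : ({p, q, t} : Finset (Fin r)).erase t = {p, q} := by
    rw [Finset.erase_insert_of_ne hpt', Finset.erase_insert_of_ne hqt']
    simp
  have f1 : (({p, q, t} : Finset (Fin r)).filter (fun j => j < p)).card = 0 := by
    rw [Finset.card_eq_zero]
    ext k
    simp only [Finset.mem_filter, Finset.mem_insert, Finset.mem_singleton,
      Finset.notMem_empty, iff_false, not_and]
    rintro (rfl | rfl | rfl)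
    exacts [lt_irrefl _, not_lt.mpr hpq.le, not_lt.mpr hpt.le]
  have f2 : (({p, q, t} : Finset (Fin r)).filter (fun j => j < q)).card = 1 := by
    have : (({p, q, t} : Finset (Fin r)).filter (fun j => j < q)) = {p} := by
      ext k
      simp only [Finset.mem_filter, Finset.mem_insert, Finset.mem_singleton]
      constructor
      · rintro ⟨rfl | rfl | rfl, hlt⟩
        · rfl
        · exact absurd hlt (lt_irrefl _)
        · exact absurd hlt (not_lt.mpr hqt.le)
      · rintro rfl
        exact ⟨Or.inl rfl, hpq⟩
    rw [this, Finset.card_singleton]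
  have f3 : (({p, q, t} : Finset (Fin r)).filter (fun j => j < t)).card = 2 := by
    have : (({p, q, t} : Finset (Fin r)).filter (fun j => j < t)) = {p, q} := by
      ext k
      simp only [Finset.mem_filter, Finset.mem_insert, Finset.mem_singleton]
      constructor
      · rintro ⟨rfl | rfl | rfl, hlt⟩
        · exact Or.inl rfl
        · exact Or.inr rfl
        · exact absurd hlt (lt_irrefl _)
      · rintro (rfl | rfl)
        · exact ⟨Or.inl rfl, hpt⟩
        · exact ⟨Or.inr (Or.inl rfl), hqt⟩
    rw [this, Finset.card_pair hpq']
  rw [bdT_single]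
  rw [Finset.sum_insert (by simp [hpq', hpt']), Finset.sum_insert (by simp [hqt']),
    Finset.sum_singleton]
  rw [e1, e2, e3, f1, f2, f3, map_add, map_add]
  simp only [apply_ite (phi K g a c s (uf a b c d s)), map_zero, map_smul, phi_single,
    smul_eq_mul, one_mul, pow_zero, pow_one]
  rw [psi_pair g a c s _ hqt, psi_pair g a c s _ hpt, psi_pair g a c s _ hpq]
  by_cases hX : EP.mlcm g {p, q, t} = uf a b c d s
  · rw [hX]
    have memp : p ∈ ({p, q, t} : Finset (Fin r)) := by simp
    have memq : q ∈ ({p, q, t} : Finset (Fin r)) := by simp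
    have memt : t ∈ ({p, q, t} : Finset (Fin r)) := by simp
    have hmem : ∀ k ∈ ({p, q, t} : Finset (Fin r)), ∀ v, g k v ≤ uf a b c d s v := by
      intro k hk v
      have h1 : g k v ≤ EP.mlcm g {p, q, t} v :=
        Finset.le_sup (f := fun k => g k v) hk
      rw [hX] at h1
      exact h1
    have hcls : ∀ k ∈ ({p, q, t} : Finset (Fin r)),
        (g k a = s ∧ g k c = s) ∨ (g k b = 1 ∧ g k d = 1) :=
      fun k hk => CL hs hab hac had hbc hbd hcd hAC hBD nab nbc ncd nad (g k)
        (hmem k hk) (gen_mem hgen k)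
    by_cases hp : g p a = s ∧ g p c = s <;>
      by_cases hq2 : g q a = s ∧ g q c = s <;>
      by_cases ht2 : g t a = s ∧ g t c = s
    · -- A A A
      simp [eps, hp, hq2, ht2]
    · -- A A B
      have hBt := (hcls t memt).resolve_left ht2
      have c1 := mixed_lcm hab hac had hbc hbd hcd (hmem q memq) (hmem t memt) hq2 hBt
      have c2 := mixed_lcm hab hac had hbc hbd hcd (hmem p memp) (hmem t memt) hp hBt
      simp [c1, c2, eps, hp, hq2, ht2]
    · -- A B A
      have hBq := (hcls q memq).resolve_left hq2
      have c1 := mixed_lcm' hab hac had hbc hbd hcd (hmem q memq) (hmem t memt) ht2 hBq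
      have c3 := mixed_lcm hab hac had hbc hbd hcd (hmem p memp) (hmem q memq) hp hBq
      simp [c1, c3, eps, hp, hq2, ht2]
    · -- A B B
      have hBq := (hcls q memq).resolve_left hq2
      have hBt := (hcls t memt).resolve_left ht2
      have c2 := mixed_lcm hab hac had hbc hbd hcd (hmem p memp) (hmem t memt) hp hBt
      have c3 := mixed_lcm hab hac had hbc hbd hcd (hmem p memp) (hmem q memq) hp hBq
      simp [c2, c3, eps, hp, hq2, ht2]
    · -- B A A
      have hBp := (hcls p memp).resolve_left hp
      have c2 := mixed_lcm' hab hac had hbc hbd hcd (hmem p memp) (hmem t memt) ht2 hBp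
      have c3 := mixed_lcm' hab hac had hbc hbd hcd (hmem p memp) (hmem q memq) hq2 hBp
      simp [c2, c3, eps, hp, hq2, ht2]
    · -- B A B
      have hBp := (hcls p memp).resolve_left hp
      have hBt := (hcls t memt).resolve_left ht2
      have c1 := mixed_lcm hab hac had hbc hbd hcd (hmem q memq) (hmem t memt) hq2 hBt
      have c3 := mixed_lcm' hab hac had hbc hbd hcd (hmem p memp) (hmem q memq) hq2 hBp
      simp [c1, c3, eps, hp, hq2, ht2]
    · -- B B A
      have hBp := (hcls p memp).resolve_left hp
      have hBq := (hcls q memq).resolve_left hq2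
      have c1 := mixed_lcm' hab hac had hbc hbd hcd (hmem q memq) (hmem t memt) ht2 hBq
      have c2 := mixed_lcm' hab hac had hbc hbd hcd (hmem p memp) (hmem t memt) ht2 hBp
      simp [c1, c2, eps, hp, hq2, ht2]
    · -- B B B
      simp [eps, hp, hq2, ht2]
  · have hpsi : ∀ F : Finset (Fin r), EP.mlcm g F = EP.mlcm g {p, q, t} →
        ¬ (EP.mlcm g F = uf a b c d s) := by
      intro F hF hcon
      rw [hF] at hcon
      exact hX hcon
    by_cases c1 : EP.mlcm g {q, t} = EP.mlcm g {p, q, t} <;>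
      by_cases c2 : EP.mlcm g {p, t} = EP.mlcm g {p, q, t} <;>
      by_cases c3 : EP.mlcm g {p, q} = EP.mlcm g {p, q, t} <;>
      simp [c1, c2, c3, hX]

end master2
end S15

namespace S15
open MvPolynomial

variable {K : Type} [Field K] {n : ℕ}

section master3

variable {G : SimpleGraph (Fin n)} {s : ℕ} {a b c d : Fin n} {r : ℕ} {g : Fin r → (Fin n → ℕ)}
variable (hs : 1 ≤ s)
variable (hab : a ≠ b) (hac : a ≠ c) (had : a ≠ d) (hbc : b ≠ c) (hbd : b ≠ d) (hcd : c ≠ d)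
variable (hAC : G.Adj a c) (hBD : G.Adj b d)
variable (nab : ¬ G.Adj a b) (nbc : ¬ G.Adj b c) (ncd : ¬ G.Adj c d) (nad : ¬ G.Adj a d)

include hs hab hac had hbc hbd hcd hAC hBD nab nbc ncd nad in
lemma master (hgen : EP.IsGenSet K g (EP.edgeIdeal K G ^ s))
    (hlin : EP.HasLinRes K g (2 * s)) : False := by
  obtain ⟨k1, hk1⟩ := ex_k1 hs hab hac had hbc hbd hcd hAC hBD nab nbc ncd nad hgen
  obtain ⟨k2, hk2⟩ := ex_k2 hs hab hac had hbc hbd hcd hAC hBD nab nbc ncd nad hgen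
  -- coordinates of u1f, u2f at a b c d
  have hu1a : u1f a c s a = s := by simp [u1f, hac, Ne.symm hac]
  have hu1c : u1f a c s c = s := by simp [u1f, hac, Ne.symm hac]
  have hu1b : u1f a c s b = 0 := by simp [u1f, Ne.symm hab, hbc, Ne.symm hbc]
  have hu2a : u2f a b c d s a = s - 1 := by
    simp [u2f, hab, hac, had, Ne.symm hab, Ne.symm hac, Ne.symm had]
  have hu2b : u2f a b c d s b = 1 := by
    simp [u2f, hab, hbc, hbd, Ne.symm hab, Ne.symm hbc, Ne.symm hbd]
  have hu2d : u2f a b c d s d = 1 := by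
    simp [u2f, had, hbd, hcd, Ne.symm had, Ne.symm hbd, Ne.symm hcd]
  have hk12 : k1 ≠ k2 := by
    intro h
    have h0 : u1f a c s b = u2f a b c d s b := by rw [← hk1, ← hk2, h]
    rw [hu1b, hu2b] at h0
    exact absurd h0 (by omega)
  have hA1 : g k1 a = s ∧ g k1 c = s := by rw [hk1]; exact ⟨hu1a, hu1c⟩
  have hB2 : g k2 b = 1 ∧ g k2 d = 1 := by rw [hk2]; exact ⟨hu2b, hu2d⟩
  have hle1 : ∀ v, g k1 v ≤ uf a b c d s v := by
    intro v; rw [hk1]; exact u1f_le_uf hs hab hac had hbc hbd hcd v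
  have hle2 : ∀ v, g k2 v ≤ uf a b c d s v := by
    intro v; rw [hk2]; exact u2f_le_uf hs hab hac had hbc hbd hcd v
  have hml : EP.mlcm g {k1, k2} = uf a b c d s :=
    mixed_lcm hab hac had hbc hbd hcd hle1 hle2 hA1 hB2
  have hdeg : (∑ x, EP.mlcm g ({k1, k2} : Finset (Fin r)) x) = 2 * s + 2 := by
    rw [hml]; exact sum_uf (a := a) (b := b) (c := c) (d := d) (s := s)
  set z : Finset (Fin r) →₀ K := Finsupp.single ({k1, k2} : Finset (Fin r)) 1 with hz
  have hzstrand : z ∈ EP.strand K g 2 (2 * s + 2) :=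
    Submodule.subset_span ⟨{k1, k2}, Finset.card_pair hk12, hdeg, rfl⟩
  have hzker : EP.bdT K g z = 0 := by
    rw [hz, bdT_single]
    have e1 : ({k1, k2} : Finset (Fin r)).erase k1 = {k2} := by
      rw [Finset.erase_insert (by simp [hk12])]
    have e2 : ({k1, k2} : Finset (Fin r)).erase k2 = {k1} := by
      rw [Finset.erase_insert_of_ne hk12, Finset.erase_singleton]
      rfl
    rw [Finset.sum_pair hk12, e1, e2, mlcm_singleton, mlcm_singleton, hml]
    rw [if_neg, if_neg, add_zero]
    · intro hcon
      have h9 := congrFun hcon b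
      rw [hk1] at h9
      rw [hu1b] at h9
      obtain ⟨-, hufb, -, -⟩ := uf_vals hab hac had hbc hbd hcd (s := s)
      rw [hufb] at h9
      omega
    · intro hcon
      have h9 := congrFun hcon a
      rw [hk2] at h9
      rw [hu2a] at h9
      obtain ⟨hufa, -, -, -⟩ := uf_vals hab hac had hbc hbd hcd (s := s)
      rw [hufa] at h9
      omega
  have heps1 : eps K g a c s k1 = 1 := by unfold eps; rw [if_pos hA1]
  have heps2 : eps K g a c s k2 = 0 := by
    unfold eps
    rw [if_neg]
    intro hcon
    have := hcon.1
    rw [hk2, hu2a] at this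
    omega
  have hphiz : phi K g a c s (uf a b c d s) z ≠ 0 := by
    rw [hz, phi_single, one_mul]
    rcases lt_or_gt_of_ne hk12 with h | h
    · rw [psi_pair g a c s _ h, if_pos hml, heps1, heps2]
      norm_num
    · have hml' : EP.mlcm g {k2, k1} = uf a b c d s := by
        rw [Finset.pair_comm k2 k1]; exact hml
      rw [Finset.pair_comm k1 k2, psi_pair g a c s _ h, if_pos hml', heps1, heps2]
      norm_num
  have hBker : Submodule.map (EP.bdT K g) (EP.strand K g 3 (2 * s + 2)) ≤
      LinearMap.ker (phi K g a c s (uf a b c d s)) := by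
    rw [EP.strand, Submodule.map_span, Submodule.span_le]
    rintro y ⟨cc, ⟨S, h3, hdegS, rfl⟩, rfl⟩
    exact LinearMap.mem_ker.mpr
      (phi_vanish hs hab hac had hbc hbd hcd hAC hBD nab nbc ncd nad hgen S h3)
  have hzZ : z ∈ EP.strand K g 2 (2 * s + 2) ⊓ LinearMap.ker (EP.bdT K g) :=
    Submodule.mem_inf.mpr ⟨hzstrand, LinearMap.mem_ker.mpr hzker⟩
  have hlt : Submodule.map (EP.bdT K g) (EP.strand K g 3 (2 * s + 2)) ⊓
      (EP.strand K g 2 (2 * s + 2) ⊓ LinearMap.ker (EP.bdT K g)) <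
      EP.strand K g 2 (2 * s + 2) ⊓ LinearMap.ker (EP.bdT K g) := by
    refine lt_of_le_of_ne inf_le_right (fun h => ?_)
    rw [← h] at hzZ
    exact hphiz (hBker (Submodule.mem_inf.mp hzZ).1)
  have hbetti : EP.betti K g 1 (2 * s + 2) ≠ 0 := by
    have hlt' : Submodule.map (EP.bdT K g) (EP.strand K g (1+1+1) (2 * s + 2)) ⊓
        (EP.strand K g (1+1) (2 * s + 2) ⊓ LinearMap.ker (EP.bdT K g)) <
        EP.strand K g (1+1) (2 * s + 2) ⊓ LinearMap.ker (EP.bdT K g) := hlt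
    have hfrk := Submodule.finrank_lt_finrank_of_lt hlt'
    unfold EP.betti EP.torRank
    omega
  have := hlin 1 (2 * s + 2) hbetti
  omega

end master3
end S15


/-- **Francisco–Hà–Van Tuyl.** If some power `I(G)^s`, `s ≥ 1`, of the edge
ideal has a linear resolution, then `G` is gap-free, i.e. the complement of `G` contains no
induced `4`-cycle. -/
theorem statement15 (K : Type) [Field K] (n : ℕ) (G : SimpleGraph (Fin n))
    (s : ℕ) (hs : 1 ≤ s) (r : ℕ) (g : Fin r → (Fin n → ℕ))
    (hgen : EP.IsGenSet K g (EP.edgeIdeal K G ^ s))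
    (hlin : EP.HasLinRes K g (2 * s)) :
    ¬ EP.HasInducedCycle Gᶜ 4 := by
  rintro ⟨f, hinj, hadj⟩
  have hne : ∀ (i j : ZMod 4), i ≠ j → f i ≠ f j := fun i j hij h => hij (hinj h)
  have hab : f 0 ≠ f 1 := hne 0 1 (by decide)
  have hac : f 0 ≠ f 2 := hne 0 2 (by decide)
  have had : f 0 ≠ f 3 := hne 0 3 (by decide)
  have hbc : f 1 ≠ f 2 := hne 1 2 (by decide)
  have hbd : f 1 ≠ f 3 := hne 1 3 (by decide)
  have hcd : f 2 ≠ f 3 := hne 2 3 (by decide)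
  have hAC : G.Adj (f 0) (f 2) := by
    have h1 : ¬ Gᶜ.Adj (f 0) (f 2) := by rw [hadj 0 2]; decide
    rw [SimpleGraph.compl_adj] at h1
    push_neg at h1
    exact h1 hac
  have hBD : G.Adj (f 1) (f 3) := by
    have h1 : ¬ Gᶜ.Adj (f 1) (f 3) := by rw [hadj 1 3]; decide
    rw [SimpleGraph.compl_adj] at h1
    push_neg at h1
    exact h1 hbd
  have nab : ¬ G.Adj (f 0) (f 1) :=
    ((SimpleGraph.compl_adj G (f 0) (f 1)).mp ((hadj 0 1).mpr (by decide))).2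
  have nbc : ¬ G.Adj (f 1) (f 2) :=
    ((SimpleGraph.compl_adj G (f 1) (f 2)).mp ((hadj 1 2).mpr (by decide))).2
  have ncd : ¬ G.Adj (f 2) (f 3) :=
    ((SimpleGraph.compl_adj G (f 2) (f 3)).mp ((hadj 2 3).mpr (by decide))).2
  have nad : ¬ G.Adj (f 0) (f 3) :=
    ((SimpleGraph.compl_adj G (f 0) (f 3)).mp ((hadj 0 3).mpr (by decide))).2
  exact S15.master hs hab hac had hbc hbd hcd hAC hBD nab nbc ncd nad hgen hlin
end
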